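/- Let n, p ≥ 1 be integers with n > 2, X ∈ ℝ^{n×p}, Y ∈ ℝ^n nonzero, τ > 0, and set H_τ = X(XᵀX + τ^{−2}I_p)^{−1}Xᵀ. Then both integrals below over (β, v) ∈ ℝ^p × (0,∞) are finite and (∫_0^∞ ∫_{ℝ^p} v · v^{−(n+p)/2−1} exp(−(‖Y − Xβ‖² + ‖β‖²/τ²)/(2v)) dβ dv) / (∫_0^∞ ∫_{ℝ^p} v^{−(n+p)/2−1} exp(−(‖Y − Xβ‖² + ‖β‖²/τ²)/(2v)) dβ dv) = Yᵀ(I_n − H_τ)Y/(n − 2). -/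

import Mathlib

open MeasureTheory Matrix

section AuxLemmas
open Real Set

-- Step D: the v-integral
lemma aux_vint {s c : ℝ} (hs : 0 < s) (hc : 0 < c) :
    IntegrableOn (fun v : ℝ => v ^ (-s-1) * Real.exp (-c/(2*v))) (Ioi 0) ∧
    ∫ v in Ioi 0, v ^ (-s-1) * Real.exp (-c/(2*v)) = (2/c) ^ s * Real.Gamma s := by
  have hc2 : (0:ℝ) < c/2 := by positivity
  set f : ℝ → ℝ := fun y => y ^ (s-1) * Real.exp (-(c/2*y)) with hf
  have hfi : IntegrableOn f (Ioi 0) := by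
    have h0 := Real.GammaIntegral_convergent hs
    have h1 := (integrableOn_Ioi_comp_mul_left_iff
      (fun x => Real.exp (-x) * x ^ (s-1)) 0 hc2).mpr (by simpa using h0)
    refine IntegrableOn.congr_fun (h1.const_mul (((c/2:ℝ) ^ (s-1))⁻¹)) ?_ measurableSet_Ioi
    intro u hu
    have hu0 : (0:ℝ) < u := hu
    have hpow : ((c/2) * u) ^ (s-1) = (c/2) ^ (s-1) * u ^ (s-1) :=
      Real.mul_rpow hc2.le hu0.le
    have hne : ((c/2:ℝ) ^ (s-1)) ≠ 0 := (Real.rpow_pos_of_pos hc2 _).ne'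
    simp only [hf]
    rw [hpow, show ∀ a b d : ℝ, a⁻¹ * (b * (a * d)) = (a⁻¹ * a) * (d * b) from
      fun a b d => by ring, inv_mul_cancel₀ hne, one_mul]
  have hval : ∫ y in Ioi 0, f y = (2/c) ^ s * Real.Gamma s := by
    have := integral_rpow_mul_exp_neg_mul_Ioi hs hc2
    rw [hf]
    simpa [one_div, inv_div] using this
  have hEq : EqOn (fun x : ℝ => x ^ ((-1:ℝ)-1) • f (x ^ (-1:ℝ)))
      (fun v : ℝ => v ^ (-s-1) * Real.exp (-c/(2*v))) (Ioi 0) := by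
    intro x hx
    have hx0 : (0:ℝ) < x := hx
    simp only [smul_eq_mul, hf]
    rw [Real.rpow_neg_one, Real.inv_rpow hx0.le, ← Real.rpow_neg hx0.le,
      ← mul_assoc, ← Real.rpow_add hx0]
    congr 2
    · ring
    · field_simp
  constructor
  · have := (integrableOn_Ioi_comp_rpow_iff' f (p := (-1:ℝ)) (by norm_num)).mpr hfi
    exact IntegrableOn.congr_fun this hEq measurableSet_Ioi
  · have key := integral_comp_rpow_Ioi f (p := (-1:ℝ)) (by norm_num)
    rw [← hval, ← key]
    refine setIntegral_congr_fun measurableSet_Ioi (fun x hx => ?_)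
    have := hEq hx
    simpa [abs_of_nonneg, smul_eq_mul] using this.symm



lemma aux_alg {n p : ℕ} (X : Matrix (Fin n) (Fin p) ℝ) (Y : Fin n → ℝ) {τ : ℝ}
    (hτ : 0 < τ) (hY : Y ≠ 0) :
    ∃ (μ : Fin p → ℝ) (c : ℝ),
      (letI A := Xᵀ * X + (τ ^ 2)⁻¹ • (1 : Matrix (Fin p) (Fin p) ℝ)
      c = Y ⬝ᵥ ((1 - X * A⁻¹ * Xᵀ).mulVec Y) ∧
      0 < c ∧
      (∀ β : Fin p → ℝ, (∑ i, (Y i - X.mulVec β i) ^ 2) + (∑ j, (β j) ^ 2) / τ ^ 2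
          = (β - μ) ⬝ᵥ A.mulVec (β - μ) + c) ∧
      (∀ x : Fin p → ℝ, (τ ^ 2)⁻¹ * (∑ j, (x j) ^ 2) ≤ x ⬝ᵥ A.mulVec x)) := by
  have hτ0 : τ ≠ 0 := hτ.ne'
  set A : Matrix (Fin p) (Fin p) ℝ := Xᵀ * X + (τ ^ 2)⁻¹ • (1 : Matrix (Fin p) (Fin p) ℝ)
    with hA
  have hτ2 : (0:ℝ) < (τ ^ 2)⁻¹ := by positivity
  have hsum : ∀ {k : ℕ} (v : Fin k → ℝ), ∑ i, (v i) ^ 2 = v ⬝ᵥ v := by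
    intro k v; simp [dotProduct, sq]
  have hAT : Aᵀ = A := by
    rw [hA]
    simp [Matrix.transpose_add, Matrix.transpose_mul, Matrix.transpose_smul]
  have hquad : ∀ x : Fin p → ℝ,
      x ⬝ᵥ A.mulVec x = (X.mulVec x) ⬝ᵥ (X.mulVec x) + (τ ^ 2)⁻¹ * (x ⬝ᵥ x) := by
    intro x
    rw [hA, Matrix.add_mulVec, dotProduct_add, ← Matrix.mulVec_mulVec,
      Matrix.dotProduct_mulVec, Matrix.vecMul_transpose, Matrix.smul_mulVec,
      Matrix.one_mulVec, dotProduct_smul, smul_eq_mul]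
  have hbdd : ∀ x : Fin p → ℝ, (τ ^ 2)⁻¹ * (∑ j, (x j) ^ 2) ≤ x ⬝ᵥ A.mulVec x := by
    intro x
    rw [hquad, hsum]
    have h0 : 0 ≤ (X.mulVec x) ⬝ᵥ (X.mulVec x) := by
      rw [← hsum]; positivity
    linarith
  have hApd : A.PosDef := by
    refine Matrix.PosDef.of_dotProduct_mulVec_pos ?_ ?_
    · show Aᴴ = A
      rw [show Aᴴ = Aᵀ from rfl, hAT]
    · intro x hx
      show 0 < (star x) ⬝ᵥ (A.mulVec x)
      rw [show (star x) = x from rfl, hquad]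
      have h1 : 0 ≤ (X.mulVec x) ⬝ᵥ (X.mulVec x) := by rw [← hsum]; positivity
      have h2 : 0 < x ⬝ᵥ x := by
        rw [← hsum]
        rcases Function.ne_iff.mp hx with ⟨j, hj⟩
        have hj2 : (0:ℝ) < (x j) ^ 2 := by
          rcases (sq_nonneg (x j)).lt_or_eq with h | h
          · exact h
          · exact absurd ((pow_eq_zero_iff two_ne_zero).mp h.symm) hj
        exact Finset.sum_pos' (fun i _ => by positivity) ⟨j, Finset.mem_univ j, hj2⟩
      nlinarith
  have hdet : IsUnit A.det := hApd.det_pos.ne'.isUnit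
  have hAAinv : A * A⁻¹ = 1 := Matrix.mul_nonsing_inv A hdet
  set μv : Fin p → ℝ := A⁻¹.mulVec (Xᵀ.mulVec Y) with hμ
  have hAμ : A.mulVec μv = Xᵀ.mulVec Y := by
    rw [hμ, Matrix.mulVec_mulVec, hAAinv, Matrix.one_mulVec]
  have hsymm : ∀ x y : Fin p → ℝ, x ⬝ᵥ A.mulVec y = y ⬝ᵥ A.mulVec x := by
    intro x y
    rw [Matrix.dotProduct_mulVec, dotProduct_comm]
    conv_lhs => rw [← hAT]
    rw [Matrix.vecMul_transpose]
  set c : ℝ := Y ⬝ᵥ Y - μv ⬝ᵥ (Xᵀ.mulVec Y) with hc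
  have hXdot : ∀ β : Fin p → ℝ, β ⬝ᵥ (Xᵀ.mulVec Y) = (X.mulVec β) ⬝ᵥ Y := by
    intro β
    rw [Matrix.dotProduct_mulVec, Matrix.vecMul_transpose]
  have hkey : ∀ β : Fin p → ℝ, (∑ i, (Y i - X.mulVec β i) ^ 2) + (∑ j, (β j) ^ 2) / τ ^ 2
      = (β - μv) ⬝ᵥ A.mulVec (β - μv) + c := by
    intro β
    have e1 : ∑ i, (Y i - X.mulVec β i) ^ 2 = (Y - X.mulVec β) ⬝ᵥ (Y - X.mulVec β) := by
      rw [show (fun i => (Y i - X.mulVec β i) ^ 2) = fun i => ((Y - X.mulVec β) i) ^ 2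
        from rfl] at *
      exact hsum _
    have e2 : (∑ j, (β j) ^ 2) = β ⬝ᵥ β := hsum β
    rw [e1, e2]
    have lhs : (Y - X.mulVec β) ⬝ᵥ (Y - X.mulVec β)
        = Y ⬝ᵥ Y - 2 * ((X.mulVec β) ⬝ᵥ Y) + (X.mulVec β) ⬝ᵥ (X.mulVec β) := by
      rw [dotProduct_sub, sub_dotProduct, sub_dotProduct,
        dotProduct_comm Y (X.mulVec β)]
      ring
    have rhs : (β - μv) ⬝ᵥ A.mulVec (β - μv)
        = β ⬝ᵥ A.mulVec β - 2 * (β ⬝ᵥ (Xᵀ.mulVec Y)) + μv ⬝ᵥ (Xᵀ.mulVec Y) := by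
      rw [Matrix.mulVec_sub, dotProduct_sub, sub_dotProduct, sub_dotProduct,
        hsymm μv β, hAμ]
      ring
    rw [lhs, rhs, hquad, hXdot, hc]
    field_simp
    ring
  have hcH : c = Y ⬝ᵥ ((1 - X * A⁻¹ * Xᵀ).mulVec Y) := by
    rw [Matrix.sub_mulVec, dotProduct_sub, Matrix.one_mulVec, hc]
    congr 1
    rw [← Matrix.mulVec_mulVec, ← Matrix.mulVec_mulVec, ← hμ, hXdot μv, dotProduct_comm]
  have hc0 : 0 < c := by
    have h0 := (hkey μv).symm
    rw [sub_self, Matrix.mulVec_zero, dotProduct_zero, zero_add] at h0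
    set t1 := ∑ i, (Y i - X.mulVec μv i) ^ 2 with ht1
    set t2 := ∑ j, (μv j) ^ 2 with ht2
    have h1 : 0 ≤ t1 := Finset.sum_nonneg fun i _ => sq_nonneg _
    have h2 : 0 ≤ t2 := Finset.sum_nonneg fun i _ => sq_nonneg _
    have hge : 0 ≤ c := by rw [h0]; positivity
    rcases hge.lt_or_eq with h | h
    · exact h
    · exfalso
      rw [← h] at h0
      have h2' : 0 ≤ t2 / τ ^ 2 := by positivity
      have ht1z : t1 = 0 := by linarith
      have ht2z : t2 = 0 := by
        have : t2 / τ ^ 2 = 0 := by linarith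
        field_simp at this
        simpa using this
      have hμ0 : μv = 0 := funext fun j => by
        have := (Finset.sum_eq_zero_iff_of_nonneg
          (fun i _ => sq_nonneg (μv i))).mp ht2z j (Finset.mem_univ j)
        exact (pow_eq_zero_iff two_ne_zero).mp this
      refine hY (funext fun i => ?_)
      have := (Finset.sum_eq_zero_iff_of_nonneg
        (fun i _ => sq_nonneg (Y i - X.mulVec μv i))).mp ht1z i (Finset.mem_univ i)
      have h' := (pow_eq_zero_iff two_ne_zero).mp this
      rw [hμ0, Matrix.mulVec_zero] at h'
      simpa [sub_eq_zero] using h'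
  exact ⟨μv, c, hcH, hc0, hkey, hbdd⟩


lemma aux_gauss_pi {p : ℕ} {b : ℝ} (hb : 0 < b) :
    Integrable (fun γ : Fin p → ℝ => Real.exp (-b * ∑ j, (γ j)^2)) := by
  have h : ∀ γ : Fin p → ℝ, Real.exp (-b * ∑ j, (γ j)^2)
      = ∏ j, Real.exp (-b * (γ j)^2) := by
    intro γ
    rw [← Real.exp_sum, ← Finset.mul_sum]
  simp_rw [h]
  exact Integrable.fintype_prod (fun _ => integrable_exp_neg_mul_sq hb)

lemma aux_gauss {p : ℕ} (A : Matrix (Fin p) (Fin p) ℝ) {b : ℝ} (hb : 0 < b)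
    (hbdd : ∀ x : Fin p → ℝ, b * (∑ j, (x j) ^ 2) ≤ x ⬝ᵥ A.mulVec x) :
    ∃ I0 : ℝ, 0 < I0 ∧
      (∀ v : ℝ, 0 < v →
        Integrable (fun γ : Fin p → ℝ => Real.exp (-(γ ⬝ᵥ A.mulVec γ) / (2 * v)))) ∧
      (∀ v : ℝ, 0 < v →
        ∫ γ : Fin p → ℝ, Real.exp (-(γ ⬝ᵥ A.mulVec γ) / (2 * v))
          = v ^ ((p : ℝ) / 2) * I0) := by
  have hqc : Continuous fun γ : Fin p → ℝ => γ ⬝ᵥ A.mulVec γ := by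
    have h : (fun γ : Fin p → ℝ => γ ⬝ᵥ A.mulVec γ)
        = fun γ => ∑ i, γ i * ∑ j, A i j * γ j := by
      funext γ; simp [dotProduct, Matrix.mulVec]
    rw [h]
    refine continuous_finset_sum _ fun i _ => (continuous_apply i).mul ?_
    exact continuous_finset_sum _ fun j _ => continuous_const.mul (continuous_apply j)
  have hint : ∀ v : ℝ, 0 < v →
      Integrable (fun γ : Fin p → ℝ => Real.exp (-(γ ⬝ᵥ A.mulVec γ) / (2 * v))) := by
    intro v hv
    have hb2 : 0 < b / (2 * v) := by positivity
    have h2 : (0:ℝ) < 2 * v := by positivity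
    refine (aux_gauss_pi hb2).mono' ?_ ?_
    · exact ((hqc.neg.div_const (2 * v)).rexp).aestronglyMeasurable
    · refine ae_of_all _ fun γ => ?_
      rw [Real.norm_eq_abs, abs_of_pos (Real.exp_pos _)]
      apply Real.exp_le_exp.mpr
      have h3 : b / (2*v) * ∑ j, (γ j)^2 ≤ (γ ⬝ᵥ A.mulVec γ) / (2*v) := by
        rw [div_mul_eq_mul_div]
        exact (div_le_div_iff_of_pos_right h2).mpr (hbdd γ)
      rw [neg_div, neg_mul]
      linarith
  set I0 : ℝ := ∫ γ : Fin p → ℝ, Real.exp (-(γ ⬝ᵥ A.mulVec γ) / 2) with hI0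
  have hI0int : Integrable (fun γ : Fin p → ℝ => Real.exp (-(γ ⬝ᵥ A.mulVec γ) / 2)) := by
    have := hint 1 one_pos
    simpa using this
  have hI0pos : 0 < I0 := by
    rw [hI0]
    rw [integral_pos_iff_support_of_nonneg_ae
      (ae_of_all _ fun γ => (Real.exp_pos _).le) hI0int]
    have hsupp : Function.support (fun γ : Fin p → ℝ =>
        Real.exp (-(γ ⬝ᵥ A.mulVec γ) / 2)) = Set.univ :=
      Set.eq_univ_iff_forall.mpr fun γ => (Real.exp_pos _).ne'
    rw [hsupp]
    exact isOpen_univ.measure_pos volume ⟨0, trivial⟩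
  refine ⟨I0, hI0pos, hint, fun v hv => ?_⟩
  have hfr : Module.finrank ℝ (Fin p → ℝ) = p := Module.finrank_fin_fun ℝ
  have key := MeasureTheory.Measure.integral_comp_smul (volume : Measure (Fin p → ℝ))
    (fun γ : Fin p → ℝ => Real.exp (-(γ ⬝ᵥ A.mulVec γ) / (2 * v))) (Real.sqrt v)
  have hs : ∀ γ : Fin p → ℝ,
      Real.exp (-((Real.sqrt v • γ) ⬝ᵥ A.mulVec (Real.sqrt v • γ)) / (2 * v))
        = Real.exp (-(γ ⬝ᵥ A.mulVec γ) / 2) := by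
    intro γ
    congr 1
    rw [Matrix.mulVec_smul, smul_dotProduct, dotProduct_smul, smul_eq_mul, smul_eq_mul,
      ← mul_assoc, Real.mul_self_sqrt hv.le]
    field_simp
  simp_rw [hs, hfr] at key
  -- key : I0 = |((√v) ^ p)⁻¹| • ∫ γ, exp(-(γ⬝Aγ)/(2v))
  have hsq : (0:ℝ) < Real.sqrt v ^ p := pow_pos (Real.sqrt_pos.mpr hv) p
  rw [← hI0] at key
  rw [abs_of_pos (inv_pos.mpr hsq), smul_eq_mul] at key
  have hrpow : Real.sqrt v ^ p = v ^ ((p : ℝ) / 2) := by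
    rw [Real.sqrt_eq_rpow, ← Real.rpow_natCast (v ^ ((1:ℝ)/2)) p, ← Real.rpow_mul hv.le]
    congr 1
    ring
  rw [← hrpow]
  field_simp at key ⊢
  linarith [key]

end AuxLemmas

open Real in
/-- Equation (17): under the conjugate Bayesian ridge regression model, the marginal
posterior mean of σ² equals Yᵀ(I − H_τ)Y/(n − 2). -/
theorem stmt_11 (n p : ℕ) (hn : 1 ≤ n) (hp : 1 ≤ p) (hn2 : 2 < n)
    (X : Matrix (Fin n) (Fin p) ℝ) (Y : Fin n → ℝ) (hY : Y ≠ 0) (τ : ℝ) (hτ : 0 < τ)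
    (Hτ : Matrix (Fin n) (Fin n) ℝ)
    (hH : Hτ = X * (Xᵀ * X + (τ ^ 2)⁻¹ • (1 : Matrix (Fin p) (Fin p) ℝ))⁻¹ * Xᵀ) :
    Integrable (fun q : ℝ × (Fin p → ℝ) =>
        q.1 * (q.1 ^ (-((n : ℝ) + p) / 2 - 1) *
          Real.exp (-((∑ i, (Y i - X.mulVec q.2 i) ^ 2) + (∑ j, (q.2 j) ^ 2) / τ ^ 2) /
            (2 * q.1))))
      ((volume.restrict (Set.Ioi (0 : ℝ))).prod volume) ∧
    Integrable (fun q : ℝ × (Fin p → ℝ) =>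
        q.1 ^ (-((n : ℝ) + p) / 2 - 1) *
          Real.exp (-((∑ i, (Y i - X.mulVec q.2 i) ^ 2) + (∑ j, (q.2 j) ^ 2) / τ ^ 2) /
            (2 * q.1)))
      ((volume.restrict (Set.Ioi (0 : ℝ))).prod volume) ∧
    (∫ v in Set.Ioi (0 : ℝ), ∫ β : Fin p → ℝ,
        v * (v ^ (-((n : ℝ) + p) / 2 - 1) *
          Real.exp (-((∑ i, (Y i - X.mulVec β i) ^ 2) + (∑ j, (β j) ^ 2) / τ ^ 2) /
            (2 * v)))) /
      (∫ v in Set.Ioi (0 : ℝ), ∫ β : Fin p → ℝ,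
        v ^ (-((n : ℝ) + p) / 2 - 1) *
          Real.exp (-((∑ i, (Y i - X.mulVec β i) ^ 2) + (∑ j, (β j) ^ 2) / τ ^ 2) /
            (2 * v))) =
      Y ⬝ᵥ ((1 - Hτ).mulVec Y) / ((n : ℝ) - 2) := by
  obtain ⟨μv, c, hcH, hc0, hkey, hbdd⟩ := aux_alg X Y hτ hY
  set A : Matrix (Fin p) (Fin p) ℝ := Xᵀ * X + (τ ^ 2)⁻¹ • (1 : Matrix (Fin p) (Fin p) ℝ)
    with hA
  have hb : (0:ℝ) < (τ ^ 2)⁻¹ := by positivity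
  obtain ⟨I0, hI0pos, hGint, hGval⟩ := aux_gauss A hb hbdd
  set e : ℝ := -((n : ℝ) + p) / 2 - 1 with he
  set s₂ : ℝ := (n : ℝ) / 2 with hs₂def
  set s₁ : ℝ := (n : ℝ) / 2 - 1 with hs₁def
  have hn2' : (2:ℝ) < (n:ℝ) := by exact_mod_cast hn2
  have hs₁ : 0 < s₁ := by rw [hs₁def]; linarith
  have hs₂ : 0 < s₂ := by rw [hs₂def]; linarith
  -- continuity of the quadratic expression
  have hQc : Continuous fun β : Fin p → ℝ =>
      (∑ i, (Y i - X.mulVec β i) ^ 2) + (∑ j, (β j) ^ 2) / τ ^ 2 := by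
    apply Continuous.add
    · refine continuous_finset_sum _ fun i _ => ?_
      have hXc : Continuous fun β : Fin p → ℝ => X.mulVec β i := by
        simp only [Matrix.mulVec, dotProduct]
        exact continuous_finset_sum _ fun j _ => continuous_const.mul (continuous_apply j)
      exact (continuous_const.sub hXc).pow 2
    · exact (continuous_finset_sum _ fun j _ => (continuous_apply j).pow 2).div_const _
  have hQnn : ∀ β : Fin p → ℝ, (∑ j, (β j) ^ 2) / τ ^ 2
      ≤ (∑ i, (Y i - X.mulVec β i) ^ 2) + (∑ j, (β j) ^ 2) / τ ^ 2 := by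
    intro β
    have : 0 ≤ ∑ i, (Y i - X.mulVec β i) ^ 2 := Finset.sum_nonneg fun i _ => sq_nonneg _
    linarith
  -- integrability in β for fixed v > 0
  have hβint : ∀ v : ℝ, 0 < v → Integrable (fun β : Fin p → ℝ =>
      Real.exp (-((∑ i, (Y i - X.mulVec β i) ^ 2) + (∑ j, (β j) ^ 2) / τ ^ 2) / (2 * v))) := by
    intro v hv
    have hb2 : (0:ℝ) < (τ ^ 2)⁻¹ / (2 * v) := by positivity
    have h2v : (0:ℝ) < 2 * v := by positivity
    refine (aux_gauss_pi hb2).mono' ?_ (ae_of_all _ fun β => ?_)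
    · exact ((hQc.neg.div_const (2 * v)).rexp).aestronglyMeasurable
    · rw [Real.norm_eq_abs, abs_of_pos (Real.exp_pos _)]
      apply Real.exp_le_exp.mpr
      have h3 : (τ ^ 2)⁻¹ / (2*v) * ∑ j, (β j)^2
          ≤ ((∑ i, (Y i - X.mulVec β i) ^ 2) + (∑ j, (β j) ^ 2) / τ ^ 2) / (2*v) := by
        rw [div_mul_eq_mul_div]
        apply (div_le_div_iff_of_pos_right h2v).mpr
        have h4 : (∑ j, (β j) ^ 2) / τ ^ 2 = (τ ^ 2)⁻¹ * ∑ j, (β j) ^ 2 :=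
          div_eq_inv_mul _ _
        linarith [hQnn β]
      rw [neg_div, neg_mul]
      linarith
  -- the inner Gaussian integral
  have hInner : ∀ v : ℝ, 0 < v →
      (∫ β : Fin p → ℝ, Real.exp
        (-((∑ i, (Y i - X.mulVec β i) ^ 2) + (∑ j, (β j) ^ 2) / τ ^ 2) / (2 * v)))
      = v ^ ((p:ℝ)/2) * Real.exp (-c/(2*v)) * I0 := by
    intro v hv
    have e1 : ∀ β : Fin p → ℝ, Real.exp
        (-((∑ i, (Y i - X.mulVec β i) ^ 2) + (∑ j, (β j) ^ 2) / τ ^ 2) / (2 * v))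
        = Real.exp (-c/(2*v)) *
          Real.exp (-((β - μv) ⬝ᵥ A.mulVec (β - μv)) / (2*v)) := by
      intro β
      rw [← Real.exp_add]
      congr 1
      rw [hkey β]
      ring
    simp_rw [e1]
    rw [MeasureTheory.integral_const_mul _ _]
    rw [show (fun β : Fin p → ℝ =>
        Real.exp (-((β - μv) ⬝ᵥ A.mulVec (β - μv)) / (2*v)))
      = (fun β => (fun γ : Fin p → ℝ => Real.exp (-(γ ⬝ᵥ A.mulVec γ) / (2*v))) (β - μv))
      from rfl]
    rw [integral_sub_right_eq_self (μ := (volume : Measure (Fin p → ℝ)))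
      (fun γ : Fin p → ℝ => Real.exp (-(γ ⬝ᵥ A.mulVec γ) / (2*v))) μv]
    rw [hGval v hv]
    ring
  -- rpow bookkeeping
  have hE1 : ∀ v : ℝ, 0 < v → v ^ e * v ^ ((p:ℝ)/2) = v ^ (-s₂ - 1) := by
    intro v hv
    rw [← Real.rpow_add hv]
    congr 1
    rw [he, hs₂def]
    push_cast
    ring
  have hE2 : ∀ v : ℝ, 0 < v → v * (v ^ e * v ^ ((p:ℝ)/2)) = v ^ (-s₁ - 1) := by
    intro v hv
    nth_rewrite 1 [← Real.rpow_one v]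
    rw [← Real.rpow_add hv, ← Real.rpow_add hv]
    congr 1
    rw [he, hs₁def]
    push_cast
    ring
  -- pointwise identity for the denominator inner integral
  have hDen : ∀ v : ℝ, 0 < v →
      (∫ β : Fin p → ℝ, v ^ e * Real.exp
        (-((∑ i, (Y i - X.mulVec β i) ^ 2) + (∑ j, (β j) ^ 2) / τ ^ 2) / (2 * v)))
      = I0 * (v ^ (-s₂ - 1) * Real.exp (-c/(2*v))) := by
    intro v hv
    rw [MeasureTheory.integral_const_mul _ _, hInner v hv, ← hE1 v hv]
    ring
  have hNum : ∀ v : ℝ, 0 < v →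
      (∫ β : Fin p → ℝ, v * (v ^ e * Real.exp
        (-((∑ i, (Y i - X.mulVec β i) ^ 2) + (∑ j, (β j) ^ 2) / τ ^ 2) / (2 * v))))
      = I0 * (v ^ (-s₁ - 1) * Real.exp (-c/(2*v))) := by
    intro v hv
    rw [MeasureTheory.integral_const_mul _ _, MeasureTheory.integral_const_mul _ _, hInner v hv, ← hE2 v hv]
    ring
  -- measurability of the joint integrands
  have hae : ∀ᵐ q : ℝ × (Fin p → ℝ)
      ∂((volume.restrict (Set.Ioi (0 : ℝ))).prod volume), 0 < q.1 := by
    have hps : (volume.restrict (Set.Ioi (0 : ℝ))).prod (volume : Measure (Fin p → ℝ))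
        = ((volume.prod volume).restrict ((Set.Ioi (0 : ℝ)) ×ˢ Set.univ)) := by
      rw [← Measure.restrict_univ (μ := (volume : Measure (Fin p → ℝ)))]
      rw [Measure.prod_restrict, Measure.restrict_univ]
    rw [hps]
    filter_upwards [ae_restrict_mem (measurableSet_Ioi.prod MeasurableSet.univ)] with q hq
    exact hq.1
  have hMexp : Measurable (fun q : ℝ × (Fin p → ℝ) => Real.exp
      (-((∑ i, (Y i - X.mulVec q.2 i) ^ 2) + (∑ j, (q.2 j) ^ 2) / τ ^ 2) / (2 * q.1))) := by
    apply Measurable.exp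
    exact ((hQc.comp continuous_snd).measurable.neg).div
      ((measurable_const.mul measurable_fst))
  have hMden : AEStronglyMeasurable (fun q : ℝ × (Fin p → ℝ) => q.1 ^ e * Real.exp
      (-((∑ i, (Y i - X.mulVec q.2 i) ^ 2) + (∑ j, (q.2 j) ^ 2) / τ ^ 2) / (2 * q.1)))
      ((volume.restrict (Set.Ioi (0 : ℝ))).prod volume) := by
    have hG : Measurable (fun q : ℝ × (Fin p → ℝ) =>
        Real.exp (Real.log q.1 * e) * Real.exp
        (-((∑ i, (Y i - X.mulVec q.2 i) ^ 2) + (∑ j, (q.2 j) ^ 2) / τ ^ 2) / (2 * q.1))) :=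
      ((Real.measurable_log.comp measurable_fst).mul measurable_const).exp.mul hMexp
    refine hG.aestronglyMeasurable.congr ?_
    filter_upwards [hae] with q hq
    rw [Real.rpow_def_of_pos hq]
  have hMnum : AEStronglyMeasurable (fun q : ℝ × (Fin p → ℝ) => q.1 * (q.1 ^ e * Real.exp
      (-((∑ i, (Y i - X.mulVec q.2 i) ^ 2) + (∑ j, (q.2 j) ^ 2) / τ ^ 2) / (2 * q.1))))
      ((volume.restrict (Set.Ioi (0 : ℝ))).prod volume) :=
    measurable_fst.aestronglyMeasurable.mul hMden
  -- denominator joint integrability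
  have hIntDen : Integrable (fun q : ℝ × (Fin p → ℝ) =>
      q.1 ^ e * Real.exp
        (-((∑ i, (Y i - X.mulVec q.2 i) ^ 2) + (∑ j, (q.2 j) ^ 2) / τ ^ 2) / (2 * q.1)))
      ((volume.restrict (Set.Ioi (0 : ℝ))).prod volume) := by
    rw [integrable_prod_iff hMden]
    constructor
    · filter_upwards [ae_restrict_mem measurableSet_Ioi] with v hv
      exact (hβint v hv).const_mul _
    · refine Integrable.congr (((aux_vint hs₂ hc0).1.const_mul I0)) ?_
      filter_upwards [ae_restrict_mem measurableSet_Ioi] with v hv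
      have hv' : (0:ℝ) < v := hv
      have hnn : (fun β : Fin p → ℝ => ‖v ^ e * Real.exp
          (-((∑ i, (Y i - X.mulVec β i) ^ 2) + (∑ j, (β j) ^ 2) / τ ^ 2) / (2 * v))‖)
          = fun β : Fin p → ℝ => v ^ e * Real.exp
          (-((∑ i, (Y i - X.mulVec β i) ^ 2) + (∑ j, (β j) ^ 2) / τ ^ 2) / (2 * v)) := by
        funext β
        rw [Real.norm_eq_abs, abs_of_pos]
        have := Real.rpow_pos_of_pos hv' e
        positivity
      show I0 * (v ^ (-s₂ - 1) * Real.exp (-c/(2*v)))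
        = ∫ β : Fin p → ℝ, ‖v ^ e * Real.exp
          (-((∑ i, (Y i - X.mulVec β i) ^ 2) + (∑ j, (β j) ^ 2) / τ ^ 2) / (2 * v))‖
      rw [hnn]
      exact (hDen v hv').symm
  have hIntNum : Integrable (fun q : ℝ × (Fin p → ℝ) =>
      q.1 * (q.1 ^ e * Real.exp
        (-((∑ i, (Y i - X.mulVec q.2 i) ^ 2) + (∑ j, (q.2 j) ^ 2) / τ ^ 2) / (2 * q.1))))
      ((volume.restrict (Set.Ioi (0 : ℝ))).prod volume) := by
    rw [integrable_prod_iff hMnum]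
    constructor
    · filter_upwards [ae_restrict_mem measurableSet_Ioi] with v hv
      exact ((hβint v hv).const_mul _).const_mul _
    · refine Integrable.congr (((aux_vint hs₁ hc0).1.const_mul I0)) ?_
      filter_upwards [ae_restrict_mem measurableSet_Ioi] with v hv
      have hv' : (0:ℝ) < v := hv
      have hnn : (fun β : Fin p → ℝ => ‖v * (v ^ e * Real.exp
          (-((∑ i, (Y i - X.mulVec β i) ^ 2) + (∑ j, (β j) ^ 2) / τ ^ 2) / (2 * v)))‖)
          = fun β : Fin p → ℝ => v * (v ^ e * Real.exp
          (-((∑ i, (Y i - X.mulVec β i) ^ 2) + (∑ j, (β j) ^ 2) / τ ^ 2) / (2 * v))) := by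
        funext β
        rw [Real.norm_eq_abs, abs_of_pos]
        have := Real.rpow_pos_of_pos hv' e
        positivity
      show I0 * (v ^ (-s₁ - 1) * Real.exp (-c/(2*v)))
        = ∫ β : Fin p → ℝ, ‖v * (v ^ e * Real.exp
          (-((∑ i, (Y i - X.mulVec β i) ^ 2) + (∑ j, (β j) ^ 2) / τ ^ 2) / (2 * v)))‖
      rw [hnn]
      exact (hNum v hv').symm
  refine ⟨hIntNum, hIntDen, ?_⟩
  -- compute the two outer integrals
  have hDenVal : (∫ v in Set.Ioi (0 : ℝ), ∫ β : Fin p → ℝ,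
      v ^ e * Real.exp
        (-((∑ i, (Y i - X.mulVec β i) ^ 2) + (∑ j, (β j) ^ 2) / τ ^ 2) / (2 * v)))
      = I0 * ((2/c) ^ s₂ * Real.Gamma s₂) := by
    rw [setIntegral_congr_fun measurableSet_Ioi (fun v hv => hDen v hv)]
    rw [MeasureTheory.integral_const_mul _ _, (aux_vint hs₂ hc0).2]
  have hNumVal : (∫ v in Set.Ioi (0 : ℝ), ∫ β : Fin p → ℝ,
      v * (v ^ e * Real.exp
        (-((∑ i, (Y i - X.mulVec β i) ^ 2) + (∑ j, (β j) ^ 2) / τ ^ 2) / (2 * v))))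
      = I0 * ((2/c) ^ s₁ * Real.Gamma s₁) := by
    rw [setIntegral_congr_fun measurableSet_Ioi (fun v hv => hNum v hv)]
    rw [MeasureTheory.integral_const_mul _ _, (aux_vint hs₁ hc0).2]
  rw [hNumVal, hDenVal]
  -- final arithmetic
  have h2c : (0:ℝ) < 2 / c := by positivity
  have hG1 : (0:ℝ) < Real.Gamma s₁ := Real.Gamma_pos_of_pos hs₁
  have hGadd : Real.Gamma s₂ = s₁ * Real.Gamma s₁ := by
    have : s₂ = s₁ + 1 := by rw [hs₁def, hs₂def]; ring
    rw [this, Real.Gamma_add_one hs₁.ne']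
  have hradd : (2/c) ^ s₂ = (2/c) ^ s₁ * (2/c) := by
    have : s₂ = s₁ + 1 := by rw [hs₁def, hs₂def]; ring
    rw [this, Real.rpow_add h2c, Real.rpow_one]
  rw [hGadd, hradd, hH, ← hcH]
  have hr : (0:ℝ) < (2/c) ^ s₁ := Real.rpow_pos_of_pos h2c _
  have h2s : (n:ℝ) - 2 = 2 * s₁ := by rw [hs₁def]; ring
  rw [h2s]
  have hcne : c ≠ 0 := hc0.ne'
  have hd2 : (0:ℝ) < I0 * ((2/c) ^ s₁ * (2/c) * (s₁ * Real.Gamma s₁)) :=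
    mul_pos hI0pos (mul_pos (mul_pos hr h2c) (mul_pos hs₁ hG1))
  rw [div_eq_div_iff hd2.ne' (by linarith : (0:ℝ) < 2 * s₁).ne']
  field_simp
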